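/- Fix a real number R and ρ ∈ [0,1]. Then E_e(R,Q) ≥ min over all pairs (T,V) of { D(T∘V‖Q∘P) + ρ·( D(T∘V‖T×Q) − R ) }. In the case of equality, every minimizer of E_e(R,Q) also minimizes the right-hand side and satisfies D(T∘V‖T×Q) = R when ρ ∈ (0,1), respectively D(T∘V‖T×Q) ≥ R when ρ = 1 and D(T∘V‖T×Q) ≤ R when ρ = 0. Conversely, if the right-hand minimum is attained by some (T_ρ,V_ρ) satisfying the corresponding condition (D(T_ρ∘V_ρ‖T_ρ×Q) = R, or ≥ R for ρ = 1, or ≤ R for ρ = 0), then (T_ρ,V_ρ) also attains the minimum defining E_e(R,Q) and equality holds. -/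

import Mathlib

open scoped BigOperators
open Filter Topology

/-- `f` is a probability mass function on a finite alphabet. -/
def IsPMF {α : Type*} [Fintype α] (f : α → ℝ) : Prop :=
  (∀ a, 0 ≤ f a) ∧ ∑ a, f a = 1

/-- `P` is a discrete memoryless channel from `𝓧` to `𝓨`. -/
def IsChannel {𝓧 𝓨 : Type*} [Fintype 𝓧] [Fintype 𝓨] (P : 𝓧 → 𝓨 → ℝ) : Prop :=
  ∀ x, IsPMF (P x)

/-- `V` is a conditional pmf on `𝓧` given `𝓨`. -/
def IsCondPMF {𝓧 𝓨 : Type*} [Fintype 𝓧] [Fintype 𝓨] (V : 𝓨 → 𝓧 → ℝ) : Prop :=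
  ∀ y, IsPMF (V y)

/-- one term `s·log(s/t)` of a KL divergence, with the conventions
    `0·log(0/t) = 0` and `s·log(s/0) = +∞` for `s > 0`. -/
noncomputable def klTerm (s t : ℝ) : EReal :=
  if s = 0 then 0 else if t = 0 then ⊤ else ((s * Real.log (s / t) : ℝ) : EReal)

/-- `D(T∘V ‖ Q∘P)`. -/
noncomputable def DQP {𝓧 𝓨 : Type*} [Fintype 𝓧] [Fintype 𝓨]
    (T : 𝓨 → ℝ) (V : 𝓨 → 𝓧 → ℝ) (Q : 𝓧 → ℝ) (P : 𝓧 → 𝓨 → ℝ) : EReal :=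
  ∑ y, ∑ x, klTerm (T y * V y x) (Q x * P x y)

/-- `D(T∘V ‖ T×Q)`. -/
noncomputable def DTQ {𝓧 𝓨 : Type*} [Fintype 𝓧] [Fintype 𝓨]
    (T : 𝓨 → ℝ) (V : 𝓨 → 𝓧 → ℝ) (Q : 𝓧 → ℝ) : EReal :=
  ∑ y, ∑ x, klTerm (T y * V y x) (T y * Q x)

/-- Gallager's function `E₀(ρ,Q)` (for `ρ > −1`). -/
noncomputable def E0 {𝓧 𝓨 : Type*} [Fintype 𝓧] [Fintype 𝓨]
    (ρ : ℝ) (Q : 𝓧 → ℝ) (P : 𝓧 → 𝓨 → ℝ) : ℝ :=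
  - Real.log (∑ y, (∑ x, Q x * P x y ^ (1 / (1 + ρ))) ^ (1 + ρ))

/-- The joint distribution `T_ρ∘V_ρ` on `𝓧 × 𝓨` (for `ρ > −1`). -/
noncomputable def Jrho {𝓧 𝓨 : Type*} [Fintype 𝓧] [Fintype 𝓨]
    (ρ : ℝ) (Q : 𝓧 → ℝ) (P : 𝓧 → 𝓨 → ℝ) (x : 𝓧) (y : 𝓨) : ℝ :=
  Q x * P x y ^ (1 / (1 + ρ)) * (∑ a, Q a * P a y ^ (1 / (1 + ρ))) ^ ρ /
    ∑ y', (∑ a, Q a * P a y' ^ (1 / (1 + ρ))) ^ (1 + ρ)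

/-- `max_{x : Q(x) > 0} P(y|x)`. -/
noncomputable def maxP {𝓧 𝓨 : Type*} (Q : 𝓧 → ℝ) (P : 𝓧 → 𝓨 → ℝ) (y : 𝓨) : ℝ :=
  ⨆ x : {x // 0 < Q x}, P x.1 y

/-- `E₀(−1,Q) = −log ∑_y max_{x : Q(x)>0} P(y|x)`. -/
noncomputable def E0m1 {𝓧 𝓨 : Type*} [Fintype 𝓧] [Fintype 𝓨]
    (Q : 𝓧 → ℝ) (P : 𝓧 → 𝓨 → ℝ) : ℝ :=
  - Real.log (∑ y, maxP Q P y)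

/-- `E₀(ρ,Q)` extended to `ρ = −1`. -/
noncomputable def E0full {𝓧 𝓨 : Type*} [Fintype 𝓧] [Fintype 𝓨]
    (ρ : ℝ) (Q : 𝓧 → ℝ) (P : 𝓧 → 𝓨 → ℝ) : ℝ :=
  if ρ = -1 then E0m1 Q P else E0 ρ Q P

/-- `T_{−1}(y) ∝ max_{a : Q(a)>0} P(y|a)`. -/
noncomputable def Tm1 {𝓧 𝓨 : Type*} [Fintype 𝓧] [Fintype 𝓨]
    (Q : 𝓧 → ℝ) (P : 𝓧 → 𝓨 → ℝ) (y : 𝓨) : ℝ :=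
  maxP Q P y / ∑ y', maxP Q P y'

/-- `V` is admissible at `ρ = −1`: `V(x|y) = 0` for every `x` outside
    `argmax_{a : Q(a)>0} P(y|a)`. -/
def AdmissibleAtM1 {𝓧 𝓨 : Type*} [Fintype 𝓧] [Fintype 𝓨]
    (Q : 𝓧 → ℝ) (P : 𝓧 → 𝓨 → ℝ) (V : 𝓨 → 𝓧 → ℝ) : Prop :=
  ∀ y x, ¬ (0 < Q x ∧ ∀ a, 0 < Q a → P a y ≤ P x y) → V y x = 0

/-- the error exponent `E_e(R,Q)`. -/
noncomputable def Ee {𝓧 𝓨 : Type*} [Fintype 𝓧] [Fintype 𝓨]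
    (R : ℝ) (Q : 𝓧 → ℝ) (P : 𝓧 → 𝓨 → ℝ) : EReal :=
  sInf {v | ∃ T : 𝓨 → ℝ, ∃ V : 𝓨 → 𝓧 → ℝ, IsPMF T ∧ IsCondPMF V ∧
    v = DQP T V Q P + max (DTQ T V Q - (R : EReal)) 0}

/-- the ML correct-decoding exponent `E_c^{ML}(R,Q)`. -/
noncomputable def EcML {𝓧 𝓨 : Type*} [Fintype 𝓧] [Fintype 𝓨]
    (R : ℝ) (Q : 𝓧 → ℝ) (P : 𝓧 → 𝓨 → ℝ) : EReal :=
  sInf {v | ∃ T : 𝓨 → ℝ, ∃ V : 𝓨 → 𝓧 → ℝ, IsPMF T ∧ IsCondPMF V ∧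
    v = DQP T V Q P + max ((R : EReal) - DTQ T V Q) 0}

/-- the strict correct-decoding exponent `E_c(R,Q)` (`+∞` if infeasible). -/
noncomputable def Ec {𝓧 𝓨 : Type*} [Fintype 𝓧] [Fintype 𝓨]
    (R : ℝ) (Q : 𝓧 → ℝ) (P : 𝓧 → 𝓨 → ℝ) : EReal :=
  sInf {v | ∃ T : 𝓨 → ℝ, ∃ V : 𝓨 → 𝓧 → ℝ, IsPMF T ∧ IsCondPMF V ∧
    (R : EReal) ≤ DTQ T V Q ∧ v = DQP T V Q P}

/-- the mutual information `I(Q∘P)`. -/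
noncomputable def MI {𝓧 𝓨 : Type*} [Fintype 𝓧] [Fintype 𝓨]
    (Q : 𝓧 → ℝ) (P : 𝓧 → 𝓨 → ℝ) : ℝ :=
  ∑ x, ∑ y, if Q x * P x y = 0 then 0
    else Q x * P x y * Real.log (P x y / ∑ a, Q a * P a y)

/-- the capacity `C(Z)` of the channel restricted to input letters in `Z`. -/
noncomputable def capacity {𝓧 𝓨 : Type*} [Fintype 𝓧] [Fintype 𝓨]
    (P : 𝓧 → 𝓨 → ℝ) (Z : Set 𝓧) : ℝ :=
  sSup {c | ∃ Q' : 𝓧 → ℝ, IsPMF Q' ∧ (∀ x, 0 < Q' x → x ∈ Z) ∧ c = MI Q' P}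

/-- `R_{−1}^{−}(Q)`. -/
noncomputable def Rm1minus {𝓧 𝓨 : Type*} [Fintype 𝓧] [Fintype 𝓨]
    (Q : 𝓧 → ℝ) (P : 𝓧 → 𝓨 → ℝ) : EReal :=
  sInf {v | ∃ V : 𝓨 → 𝓧 → ℝ, IsCondPMF V ∧ AdmissibleAtM1 Q P V ∧
    v = DTQ (Tm1 Q P) V Q}

/-- `R_{−1}^{+}(Q)`. -/
noncomputable def Rm1plus {𝓧 𝓨 : Type*} [Fintype 𝓧] [Fintype 𝓨]
    (Q : 𝓧 → ℝ) (P : 𝓧 → 𝓨 → ℝ) : EReal :=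
  sSup {v | ∃ V : 𝓨 → 𝓧 → ℝ, IsCondPMF V ∧ AdmissibleAtM1 Q P V ∧
    v = DTQ (Tm1 Q P) V Q}

/-- `F_ρ(T∘V, Q) = D(T∘V‖Q∘P) + ρ·D(T∘V‖T×Q)`. -/
noncomputable def Frho {𝓧 𝓨 : Type*} [Fintype 𝓧] [Fintype 𝓨]
    (ρ : ℝ) (T : 𝓨 → ℝ) (V : 𝓨 → 𝓧 → ℝ) (Q : 𝓧 → ℝ) (P : 𝓧 → 𝓨 → ℝ) : EReal :=
  DQP T V Q P + (ρ : EReal) * DTQ T V Q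

/-- the unconstrained penalized minimum
    `min_{T,V} { D(T∘V‖Q∘P) + ρ·(D(T∘V‖T×Q) − R) }`. -/
noncomputable def penMin {𝓧 𝓨 : Type*} [Fintype 𝓧] [Fintype 𝓨]
    (Q : 𝓧 → ℝ) (P : 𝓧 → 𝓨 → ℝ) (R ρ : ℝ) : EReal :=
  sInf {v | ∃ T : 𝓨 → ℝ, ∃ V : 𝓨 → 𝓧 → ℝ, IsPMF T ∧ IsCondPMF V ∧
    v = DQP T V Q P + (ρ : EReal) * (DTQ T V Q - (R : EReal))}

/-- the support-constrained penalized minimum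
    `min_{T,V : supp(V) ⊆ supp(Q)} { D(T∘V‖Q∘P) − ρ·(R − D(T∘V‖T×Q)) }`. -/
noncomputable def penMinS {𝓧 𝓨 : Type*} [Fintype 𝓧] [Fintype 𝓨]
    (Q : 𝓧 → ℝ) (P : 𝓧 → 𝓨 → ℝ) (R ρ : ℝ) : EReal :=
  sInf {v | ∃ T : 𝓨 → ℝ, ∃ V : 𝓨 → 𝓧 → ℝ, IsPMF T ∧ IsCondPMF V ∧
    (∀ y x, Q x = 0 → V y x = 0) ∧
    v = DQP T V Q P - (ρ : EReal) * ((R : EReal) - DTQ T V Q)}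


section Helpers

open scoped BigOperators

lemma klTerm_ne_bot (s t : ℝ) : klTerm s t ≠ ⊥ := by
  unfold klTerm; split_ifs
  · simp
  · simp
  · exact EReal.coe_ne_bot _

lemma klTerm_ne_top {s t : ℝ} (h : s = 0 ∨ t ≠ 0) : klTerm s t ≠ ⊤ := by
  unfold klTerm; split_ifs with h1 h2
  · simp
  · rcases h with h | h
    · exact absurd h h1
    · exact absurd h2 h
  · exact EReal.coe_ne_top _

lemma klTerm_self (s : ℝ) : klTerm s s = 0 := by
  unfold klTerm; split_ifs with h1
  · rfl
  · rw [div_self h1, Real.log_one, mul_zero, EReal.coe_zero]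

lemma sum_ne_bot' {α : Type*} (s : Finset α) (f : α → EReal)
    (h : ∀ a ∈ s, f a ≠ ⊥) : ∑ a ∈ s, f a ≠ ⊥ := by
  classical
  induction s using Finset.induction_on with
  | empty => simp
  | insert a s hnm ih =>
    rw [Finset.sum_insert hnm]
    intro hc
    rcases EReal.add_eq_bot_iff.mp hc with h1 | h1
    · exact h a (Finset.mem_insert_self a s) h1
    · exact ih (fun b hb => h b (Finset.mem_insert_of_mem hb)) h1

lemma exists_real_sum {α : Type*} (s : Finset α) (f : α → EReal)
    (hb : ∀ a ∈ s, f a ≠ ⊥) (ht : ∀ a ∈ s, f a ≠ ⊤) :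
    ∃ r : ℝ, ∑ a ∈ s, f a = (r : EReal) := by
  classical
  induction s using Finset.induction_on with
  | empty => exact ⟨0, by simp⟩
  | insert a s hnm ih =>
    obtain ⟨r, hr⟩ := ih (fun b hb' => hb b (Finset.mem_insert_of_mem hb'))
      (fun b hb' => ht b (Finset.mem_insert_of_mem hb'))
    refine ⟨(f a).toReal + r, ?_⟩
    rw [Finset.sum_insert hnm, hr, EReal.coe_add,
      EReal.coe_toReal (ht a (Finset.mem_insert_self a s)) (hb a (Finset.mem_insert_self a s))]

lemma coe_max' (a b : ℝ) : ((max a b : ℝ) : EReal) = max (a : EReal) b := by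
  rcases le_total a b with h | h
  · rw [max_eq_right h, max_eq_right (EReal.coe_le_coe_iff.mpr h)]
  · rw [max_eq_left h, max_eq_left (EReal.coe_le_coe_iff.mpr h)]

lemma pointwise_le {ρ : ℝ} (h0 : 0 ≤ ρ) (h1 : ρ ≤ 1) (e : EReal) (he : e ≠ ⊥) :
    (ρ : EReal) * e ≤ max e 0 := by
  induction e with
  | bot => exact absurd rfl he
  | coe r =>
    rw [← EReal.coe_mul]
    have h2 : (0 : EReal) = ((0 : ℝ) : EReal) := rfl
    rw [h2, ← coe_max' r 0]
    have : ρ * r ≤ max r 0 := by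
      rcases le_total r 0 with h | h
      · calc ρ * r ≤ 0 := mul_nonpos_of_nonneg_of_nonpos h0 h
          _ ≤ max r 0 := le_max_right _ _
      · calc ρ * r ≤ 1 * r := by nlinarith
          _ = r := one_mul r
          _ ≤ max r 0 := le_max_left _ _
    exact_mod_cast this
  | top =>
    rcases eq_or_lt_of_le h0 with h | h
    · rw [← h]; simp
    · rw [EReal.coe_mul_top_of_pos h]; exact le_max_left _ _

lemma DTQ_ne_bot {𝓧 𝓨 : Type*} [Fintype 𝓧] [Fintype 𝓨]
    (T : 𝓨 → ℝ) (V : 𝓨 → 𝓧 → ℝ) (Q : 𝓧 → ℝ) : DTQ T V Q ≠ ⊥ :=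
  sum_ne_bot' _ _ fun _ _ => sum_ne_bot' _ _ fun _ _ => klTerm_ne_bot _ _

lemma DQP_ne_bot {𝓧 𝓨 : Type*} [Fintype 𝓧] [Fintype 𝓨]
    (T : 𝓨 → ℝ) (V : 𝓨 → 𝓧 → ℝ) (Q : 𝓧 → ℝ) (P : 𝓧 → 𝓨 → ℝ) : DQP T V Q P ≠ ⊥ :=
  sum_ne_bot' _ _ fun _ _ => sum_ne_bot' _ _ fun _ _ => klTerm_ne_bot _ _

lemma sub_coe_ne_bot {x : EReal} (hx : x ≠ ⊥) (r : ℝ) : x - (r : EReal) ≠ ⊥ := by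
  rw [sub_eq_add_neg, ← EReal.coe_neg]
  intro h
  rcases EReal.add_eq_bot_iff.mp h with h | h
  · exact hx h
  · exact EReal.coe_ne_bot _ h

lemma top_sub_coe' (r : ℝ) : (⊤ : EReal) - (r : EReal) = ⊤ := by
  rw [sub_eq_add_neg, ← EReal.coe_neg]
  exact EReal.top_add_of_ne_bot (EReal.coe_ne_bot _)

lemma sub_coe_nonneg {x : EReal} {r : ℝ} (h : (r : EReal) ≤ x) : 0 ≤ x - (r : EReal) := by
  have h2 := add_le_add_left h (-(r : EReal))
  rw [sub_eq_add_neg]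
  refine le_trans ?_ h2
  rw [← EReal.coe_neg, ← EReal.coe_add]
  norm_num

lemma Ee_ne_top {𝓧 𝓨 : Type*} [Fintype 𝓧] [Fintype 𝓨]
    (P : 𝓧 → 𝓨 → ℝ) (hP : IsChannel P) (Q : 𝓧 → ℝ) (hQ : IsPMF Q) (R : ℝ) :
    Ee R Q P ≠ ⊤ := by
  classical
  set T : 𝓨 → ℝ := fun y => ∑ x, Q x * P x y with hTdef
  set V : 𝓨 → 𝓧 → ℝ := fun y x => if T y = 0 then Q x else Q x * P x y / T y with hVdef
  have hTnn : ∀ y, 0 ≤ T y := fun y =>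
    Finset.sum_nonneg fun x _ => mul_nonneg (hQ.1 x) ((hP x).1 y)
  have hT : IsPMF T := by
    refine ⟨hTnn, ?_⟩
    rw [show (∑ y, T y) = ∑ y, ∑ x, Q x * P x y from rfl, Finset.sum_comm]
    calc ∑ x, ∑ y, Q x * P x y = ∑ x, Q x * ∑ y, P x y := by
          simp [Finset.mul_sum]
      _ = ∑ x, Q x := Finset.sum_congr rfl fun x _ => by rw [(hP x).2, mul_one]
      _ = 1 := hQ.2
  have hV : IsCondPMF V := by
    intro y
    by_cases h : T y = 0
    · constructor
      · intro x; simp only [hVdef, h, if_pos]; exact hQ.1 x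
      · simp only [hVdef, h, if_pos]; exact hQ.2
    · constructor
      · intro x
        simp only [hVdef, h, ite_false]
        exact div_nonneg (mul_nonneg (hQ.1 x) ((hP x).1 y)) (hTnn y)
      · simp only [hVdef, h, ite_false]
        rw [← Finset.sum_div, div_self h]
  have hDQP : DQP T V Q P = 0 := by
    unfold DQP
    refine Finset.sum_eq_zero fun y _ => Finset.sum_eq_zero fun x _ => ?_
    by_cases h : T y = 0
    · have h0 : T y * V y x = 0 := by rw [h, zero_mul]
      rw [h0]; unfold klTerm; simp
    · have hTV : T y * V y x = Q x * P x y := by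
        simp only [hVdef, h, ite_false]
        rw [mul_comm, div_mul_cancel₀ _ h]
      rw [hTV, klTerm_self]
  have hterm : ∀ y x, klTerm (T y * V y x) (T y * Q x) ≠ ⊤ := by
    intro y x
    refine klTerm_ne_top ?_
    by_cases ht : T y * Q x = 0
    · left
      rcases mul_eq_zero.mp ht with h | h
      · rw [h, zero_mul]
      · have hv0 : V y x = 0 := by
          simp only [hVdef]
          split_ifs
          · exact h
          · rw [h, zero_mul, zero_div]
        rw [hv0, mul_zero]
    · right; exact ht
  have hDTQ : ∃ r : ℝ, DTQ T V Q = (r : EReal) := by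
    unfold DTQ
    refine exists_real_sum _ _ (fun y _ => sum_ne_bot' _ _ fun x _ => klTerm_ne_bot _ _)
      (fun y _ => ?_)
    obtain ⟨r, hr⟩ := exists_real_sum Finset.univ (fun x => klTerm (T y * V y x) (T y * Q x))
      (fun x _ => klTerm_ne_bot _ _) (fun x _ => hterm y x)
    rw [hr]; exact EReal.coe_ne_top r
  obtain ⟨r, hr⟩ := hDTQ
  have hmem : ((max (r - R) 0 : ℝ) : EReal) ∈ {v | ∃ T' : 𝓨 → ℝ, ∃ V' : 𝓨 → 𝓧 → ℝ,
      IsPMF T' ∧ IsCondPMF V' ∧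
      v = DQP T' V' Q P + max (DTQ T' V' Q - (R : EReal)) 0} := by
    refine ⟨T, V, hT, hV, ?_⟩
    rw [hDQP, hr, zero_add, ← EReal.coe_sub, coe_max', EReal.coe_zero]
  intro hc
  have hle : Ee R Q P ≤ ((max (r - R) 0 : ℝ) : EReal) := sInf_le hmem
  exact ((lt_of_le_of_lt hle (EReal.coe_lt_top _)).ne) hc

end Helpers

theorem stmt_2 {𝓧 𝓨 : Type*} [Fintype 𝓧] [Fintype 𝓨] [Nonempty 𝓧] [Nonempty 𝓨]
    (P : 𝓧 → 𝓨 → ℝ) (hP : IsChannel P) (Q : 𝓧 → ℝ) (hQ : IsPMF Q)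
    (R ρ : ℝ) (hρ : ρ ∈ Set.Icc (0 : ℝ) 1) :
    penMin Q P R ρ ≤ Ee R Q P
    ∧ (Ee R Q P = penMin Q P R ρ →
        ∀ (T : 𝓨 → ℝ) (V : 𝓨 → 𝓧 → ℝ), IsPMF T → IsCondPMF V →
          DQP T V Q P + max (DTQ T V Q - (R : EReal)) 0 = Ee R Q P →
          DQP T V Q P + (ρ : EReal) * (DTQ T V Q - (R : EReal)) = penMin Q P R ρ
          ∧ (0 < ρ → ρ < 1 → DTQ T V Q = (R : EReal))
          ∧ (ρ = 1 → (R : EReal) ≤ DTQ T V Q)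
          ∧ (ρ = 0 → DTQ T V Q ≤ (R : EReal)))
    ∧ (∀ (T : 𝓨 → ℝ) (V : 𝓨 → 𝓧 → ℝ), IsPMF T → IsCondPMF V →
        DQP T V Q P + (ρ : EReal) * (DTQ T V Q - (R : EReal)) = penMin Q P R ρ →
        (0 < ρ → ρ < 1 → DTQ T V Q = (R : EReal)) →
        (ρ = 1 → (R : EReal) ≤ DTQ T V Q) →
        (ρ = 0 → DTQ T V Q ≤ (R : EReal)) →
        DQP T V Q P + max (DTQ T V Q - (R : EReal)) 0 = Ee R Q P
        ∧ Ee R Q P = penMin Q P R ρ) := by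
  classical
  obtain ⟨hρ0, hρ1⟩ := hρ
  have hdnb : ∀ (T : 𝓨 → ℝ) (V : 𝓨 → 𝓧 → ℝ), DTQ T V Q - (R : EReal) ≠ ⊥ :=
    fun T V => sub_coe_ne_bot (DTQ_ne_bot T V Q) R
  have hle : penMin Q P R ρ ≤ Ee R Q P := by
    refine le_sInf ?_
    rintro v ⟨T, V, hT, hV, rfl⟩
    refine le_trans (sInf_le ⟨T, V, hT, hV, rfl⟩) ?_
    exact add_le_add_right (pointwise_le hρ0 hρ1 _ (hdnb T V)) _
  have hEetop : Ee R Q P ≠ ⊤ := Ee_ne_top P hP Q hQ R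
  refine ⟨hle, ?_, ?_⟩
  · intro heq T V hT hV hmin
    have h2 : DQP T V Q P + (ρ : EReal) * (DTQ T V Q - (R : EReal)) ≤ Ee R Q P :=
      le_trans (add_le_add_right (pointwise_le hρ0 hρ1 _ (hdnb T V)) _) (le_of_eq hmin)
    have eq1 : DQP T V Q P + (ρ : EReal) * (DTQ T V Q - (R : EReal)) = penMin Q P R ρ :=
      le_antisymm (heq ▸ h2) (sInf_le ⟨T, V, hT, hV, rfl⟩)
    have hXt : DQP T V Q P + max (DTQ T V Q - (R : EReal)) 0 ≠ ⊤ := by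
      rw [hmin]; exact hEetop
    have hDQPb : DQP T V Q P ≠ ⊥ := DQP_ne_bot T V Q P
    have hmaxb : max (DTQ T V Q - (R : EReal)) 0 ≠ ⊥ :=
      (lt_of_lt_of_le EReal.bot_lt_zero (le_max_right _ _)).ne'
    have hDQPt : DQP T V Q P ≠ ⊤ := fun h =>
      hXt (by rw [h, EReal.top_add_of_ne_bot hmaxb])
    have hmaxt : max (DTQ T V Q - (R : EReal)) 0 ≠ ⊤ := fun h =>
      hXt (by rw [h, EReal.add_top_of_ne_bot hDQPb])
    have hsubt : DTQ T V Q - (R : EReal) ≠ ⊤ := fun h =>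
      hmaxt (by rw [max_eq_left (h ▸ le_top : (0:EReal) ≤ DTQ T V Q - (R : EReal))]; exact h)
    have hdt : DTQ T V Q ≠ ⊤ := fun h => hsubt (by rw [h, top_sub_coe'])
    obtain ⟨a, ha⟩ : ∃ a : ℝ, DQP T V Q P = (a : EReal) :=
      ⟨(DQP T V Q P).toReal, (EReal.coe_toReal hDQPt hDQPb).symm⟩
    obtain ⟨dd, hd⟩ : ∃ dd : ℝ, DTQ T V Q = (dd : EReal) :=
      ⟨(DTQ T V Q).toReal, (EReal.coe_toReal hdt (DTQ_ne_bot T V Q)).symm⟩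
    have key : ρ * (dd - R) = max (dd - R) 0 := by
      have e1 : DQP T V Q P + (ρ : EReal) * (DTQ T V Q - (R : EReal))
          = DQP T V Q P + max (DTQ T V Q - (R : EReal)) 0 :=
        eq1.trans (heq.symm.trans hmin.symm)
      rw [ha, hd, ← EReal.coe_sub, ← EReal.coe_mul,
        show (0 : EReal) = ((0 : ℝ) : EReal) from rfl, ← coe_max',
        ← EReal.coe_add, ← EReal.coe_add] at e1
      have := EReal.coe_eq_coe_iff.mp e1
      linarith [this]
    refine ⟨eq1, ?_, ?_, ?_⟩
    · intro hz ho
      rw [hd, EReal.coe_eq_coe_iff]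
      rcases le_total (dd - R) 0 with h | h
      · rw [max_eq_right h] at key
        have : dd - R = 0 := by
          rcases mul_eq_zero.mp key with hh | hh
          · exact absurd hh (ne_of_gt hz)
          · exact hh
        linarith
      · rw [max_eq_left h] at key
        nlinarith
    · intro h1'
      rw [hd, EReal.coe_le_coe_iff]
      rw [h1', one_mul] at key
      have := le_max_right (dd - R) 0
      rw [← key] at this
      linarith
    · intro h0'
      rw [hd, EReal.coe_le_coe_iff]
      rw [h0', zero_mul] at key
      have := le_max_left (dd - R) 0
      rw [← key] at this
      linarith
  · intro T V hT hV hpen h01 h1 h0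
    have hmx : (ρ : EReal) * (DTQ T V Q - (R : EReal)) = max (DTQ T V Q - (R : EReal)) 0 := by
      rcases eq_or_lt_of_le hρ0 with hz | hzpos
      · have hρ' : ρ = 0 := hz.symm
        have hdle := h0 hρ'
        have hdt : DTQ T V Q ≠ ⊤ := (lt_of_le_of_lt hdle (EReal.coe_lt_top R)).ne
        obtain ⟨dd, hd⟩ : ∃ dd : ℝ, DTQ T V Q = (dd : EReal) :=
          ⟨(DTQ T V Q).toReal, (EReal.coe_toReal hdt (DTQ_ne_bot T V Q)).symm⟩
        have hddR : dd ≤ R := by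
          rw [hd, EReal.coe_le_coe_iff] at hdle; exact hdle
        rw [hρ', hd, ← EReal.coe_sub, show ((0:ℝ) : EReal) * ((dd - R : ℝ) : EReal)
          = (((0 : ℝ) * (dd - R) : ℝ) : EReal) from (EReal.coe_mul _ _),
          zero_mul, EReal.coe_zero,
          max_eq_right (by exact_mod_cast (EReal.coe_le_coe_iff.mpr (by linarith) :
            ((dd - R : ℝ) : EReal) ≤ ((0:ℝ) : EReal)))]
      · rcases eq_or_lt_of_le hρ1 with ho | holt
        · have hge := h1 ho
          have hnn : (0 : EReal) ≤ DTQ T V Q - (R : EReal) := sub_coe_nonneg hge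
          rw [ho, EReal.coe_one, one_mul, max_eq_left hnn]
        · have hde := h01 hzpos holt
          rw [hde, ← EReal.coe_sub, sub_self, EReal.coe_zero, mul_zero, max_self]
    have e2 : DQP T V Q P + max (DTQ T V Q - (R : EReal)) 0 = penMin Q P R ρ := by
      rw [← hmx]; exact hpen
    have hEele : Ee R Q P ≤ DQP T V Q P + max (DTQ T V Q - (R : EReal)) 0 :=
      sInf_le ⟨T, V, hT, hV, rfl⟩
    have hp : Ee R Q P = penMin Q P R ρ :=
      le_antisymm (hEele.trans (le_of_eq e2)) hle
    exact ⟨e2.trans hp.symm, hp⟩
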